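/- Every integer solution of x⁵ + x*y² + y³ = 0 is either (0,0) or of the form (x, y) = (-w - w³, w*(1 + w²)²) for some integer w, and conversely every such pair is a solution. -/

import Mathlib

theorem stmt_11 (x y : ℤ) :
    x ^ 5 + x * y ^ 2 + y ^ 3 = 0 ↔
      (x = 0 ∧ y = 0) ∨
      ∃ w : ℤ, x = -w - w ^ 3 ∧ y = w * (1 + w ^ 2) ^ 2 := by
  constructor
  · intro h
    rcases eq_or_ne x 0 with hx | hx
    · subst hx
      have hy : y ^ 3 = 0 := by linarith
      have : y = 0 := by exact pow_eq_zero_iff (by norm_num) |>.mp hy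
      exact Or.inl ⟨rfl, this⟩
    · right
      have hy : y ≠ 0 := by
        rintro rfl
        have hx5 : x ^ 5 = 0 := by linarith
        exact hx (pow_eq_zero_iff (by norm_num) |>.mp hx5)
      set g : ℤ := (Int.gcd x y : ℤ) with hgdef
      have hgpos : 0 < Int.gcd x y := Nat.pos_of_ne_zero fun h0 => hx (Int.gcd_eq_zero_iff.mp h0).1
      have hg0 : g ≠ 0 := Int.natCast_ne_zero.mpr hgpos.ne'
      obtain ⟨a, ha⟩ : g ∣ x := Int.gcd_dvd_left x y
      obtain ⟨b, hb⟩ : g ∣ y := Int.gcd_dvd_right x y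
      have hxa : x / g = a := by rw [ha]; exact Int.mul_ediv_cancel_left _ hg0
      have hyb : y / g = b := by rw [hb]; exact Int.mul_ediv_cancel_left _ hg0
      have hcop : IsCoprime a b := by
        rw [Int.isCoprime_iff_gcd_eq_one, ← hxa, ← hyb]
        exact Int.gcd_div_gcd_div_gcd hgpos
      have hb0 : b ≠ 0 := by
        rintro rfl
        rw [mul_zero] at hb
        exact hy hb
      rw [ha, hb] at h
      have key : g ^ 2 * a ^ 5 + a * b ^ 2 + b ^ 3 = 0 := by
        have h3 : g ^ 3 ≠ 0 := pow_ne_zero _ hg0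
        apply mul_left_cancel₀ h3
        rw [mul_zero]
        linear_combination h
      have hadvd : a ∣ b ^ 3 := ⟨-(g ^ 2 * a ^ 4 + b ^ 2), by linear_combination key⟩
      have hau : IsUnit a := (hcop.pow_right (n := 3)).isUnit_of_dvd' dvd_rfl hadvd
      rcases Int.isUnit_iff.mp hau with rfl | rfl
      · -- a = 1 : g² = -b² - b³
        have hsq : b ^ 2 ∣ g ^ 2 := ⟨-(1 + b), by linear_combination key⟩
        obtain ⟨e, he⟩ : b ∣ g := (Int.pow_dvd_pow_iff two_ne_zero).mp hsq
        have heq : e ^ 2 = -1 - b := by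
          have h2 : b ^ 2 ≠ 0 := pow_ne_zero _ hb0
          apply mul_left_cancel₀ h2
          linear_combination key - (b * e + g) * he
        have hbval : b = -1 - e ^ 2 := by linarith
        refine ⟨e, ?_, ?_⟩
        · rw [ha, he, hbval]; ring
        · rw [hb, he, hbval]; ring
      · -- a = -1 : g² = b³ - b²
        have hsq : b ^ 2 ∣ g ^ 2 := ⟨b - 1, by linear_combination -key⟩
        obtain ⟨e, he⟩ : b ∣ g := (Int.pow_dvd_pow_iff two_ne_zero).mp hsq
        have heq : e ^ 2 = b - 1 := by
          have h2 : b ^ 2 ≠ 0 := pow_ne_zero _ hb0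
          apply mul_left_cancel₀ h2
          linear_combination -key - (b * e + g) * he
        have hbval : b = 1 + e ^ 2 := by linarith
        refine ⟨e, ?_, ?_⟩
        · rw [ha, he, hbval]; ring
        · rw [hb, he, hbval]; ring
  · rintro (⟨rfl, rfl⟩ | ⟨w, rfl, rfl⟩) <;> ring
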